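/- Let (h_n) be the sequence of coefficients of the rational power series H(x) = x²(1-2x)/(x⁶ - 5x⁵ + 14x⁴ - 26x³ + 22x² - 8x + 1). Then there exists a constant c > 0 such that h_n ≤ c·(3.709381)^n for all n ≥ 0. -/

import Mathlib

noncomputable def Qf (v0 v1 v2 v3 v4 v5 : ℝ) : ℝ :=
  ((1678800785573 : ℝ) / 1000000) * v0 * v0 + ((-7941421124871 : ℝ) / 1000000) * v0 * v1 + ((427246160267 : ℝ) / 20000) * v0 * v2 + ((-18944911596577 : ℝ) / 500000) * v0 * v3 + ((1669938819751 : ℝ) / 62500) * v0 * v4 + ((-6227311428317 : ℝ) / 1000000) * v0 * v5 + ((-7941421124871 : ℝ) / 1000000) * v1 * v0 + ((37566203737909 : ℝ) / 1000000) * v1 * v1 + ((-25263136184303 : ℝ) / 250000) * v1 * v2 + ((35846904286179 : ℝ) / 200000) * v1 * v3 + ((-3159800284031 : ℝ) / 25000) * v1 * v4 + ((7364439116747 : ℝ) / 250000) * v1 * v5 + ((427246160267 : ℝ) / 20000) * v2 * v0 + ((-25263136184303 : ℝ) / 250000) * v2 * v1 + ((8494683889803 : ℝ) / 31250) * v2 *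 v2 + ((-96427654282169 : ℝ) / 200000) * v2 * v3 + ((33999268331343 : ℝ) / 100000) * v2 * v4 + ((-19810234761217 : ℝ) / 250000) * v2 * v5 + ((-18944911596577 : ℝ) / 500000) * v3 * v0 + ((35846904286179 : ℝ) / 200000) * v3 * v1 + ((-96427654282169 : ℝ) / 200000) * v3 * v2 + ((855157310253793 : ℝ) / 1000000) * v3 * v3 + ((-603037024468229 : ℝ) / 1000000) * v3 * v4 + ((17568473696801 : ℝ) / 125000) * v3 * v5 + ((1669938819751 : ℝ) / 62500) * v4 * v0 + ((-3159800284031 : ℝ) / 25000) * v4 * v1 + ((33999268331343 : ℝ) / 100000) * v4 * v2 + ((-603037024468229 : ℝ) / 1000000) * v4 * v3 + ((425247669403883 : ℝ) / 1000000) * v4 * v4 + ((-99111029000451 : ℝ) / 1000000) * v4 * v5 + ((-6227311428317 : ℝ) / 1000000) * v5 * v0 + ((7364439116747 : ℝ) / 250000) * v5 * v1 + ((-19810234761217 : ℝ) / 250000) * v5 * v2 + ((17568473696801 : ℝ) / 125000) * v5 * v3 + ((-99111029000451 : ℝ) / 1000000) * v5 * v4 + ((288743385469 : ℝ) / 12500)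 * v5 * v5

theorem Qf_key1 (v0 v1 v2 v3 v4 v5 : ℝ) :
    Qf v1 v2 v3 v4 v5 (8*v5 - 22*v4 + 26*v3 - 14*v2 + 5*v1 - v0) ≤ ((3709381 : ℝ)/1000000)^2 * Qf v0 v1 v2 v3 v4 v5 := by
  have hid : ((3709381 : ℝ)/1000000)^2 * Qf v0 v1 v2 v3 v4 v5
      - Qf v1 v2 v3 v4 v5 (8*v5 - 22*v4 + 26*v3 - 14*v2 + 5*v1 - v0)
      = ((1000004196023396253 : ℝ) / 1000000000000000000) * (((1 : ℝ)) * v0 + ((1319278882769 : ℝ) / 1000004196023396253) * v1 + ((2879420199350 : ℝ) / 1000004196023396253) * v2 + ((-11823453159794 : ℝ) / 1000004196023396253) * v3 + ((1745422042192 : ℝ) / 333334732007798751) * v4 + ((-7862470710037 : ℝ) / 1000004196023396253) * v5)^2 + ((125001814013384057420644477932384367 : ℝ) / 125000524502924531625000000000000000) * (((1 : ℝ)) * v1 + ((-16831714088906929877842135718273 : ℝ) / 500007256053536229682577911729537468) * v2 + ((50663594242196392017401349760621 : ℝ) / 1000014512107072459365155823459074936) * v3 + ((-6375163723687187337310995419733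 : ℝ) / 125001814013384057420644477932384367) * v4 + ((10209956562852900312787856894657 : ℝ) / 1000014512107072459365155823459074936) * v5)^2 + ((250017248481990959377993334314201566575142319070129011 : ℝ) / 250003628026768114841288955864768734000000000000000000) * (((1 : ℝ)) * v2 + ((-58646822655688129245593621732034662384020436861899 : ℝ) / 500034496963981918755986668628403133150284638140258022) * v3 + ((26619037249731021756821213513743236825784711040208 : ℝ) / 250017248481990959377993334314201566575142319070129011) * v4 + ((-14393197718983475750047610183778902046887653111827 : ℝ) / 500034496963981918755986668628403133150284638140258022) * v5)^2 + ((250075478203522008099224197397862942516532337441167287659769402889382283 : ℝ) / 250017248481990959377993334314201566575142319070129011000000000000000000) * (((1 : ℝ)) * v3 + ((-16418599786143718851341542766927042982039882733741098732237370251238 : ℝ) / 83358492734507336033074732465954314172177445813722429219923134296460761) * v4 + ((30644852912801361822978767044822017710814477885017701666229581153105 : ℝ) / 500150956407044016198448394795725885033064674882334575319538805778764566) * v5)^2 + ((83372543429595231503632112447383290424596494120396755110403189738836875908982204855408191 : ℝ) / 83358492734507336033074732465954314172177445813722429219923134296460761000000000000000000) * (((1 : ℝ)) * v4 + ((-3924918802247264187482567258780096635962370665556137864064283086734510522984072284679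 : ℝ) / 83372543429595231503632112447383290424596494120396755110403189738836875908982204855408191) * v5)^2 + ((1000481584357278283019733299249202851647854949507321463839732175343534861339451953895364933006569185842842343 : ℝ) / 1000470521155142778043585349368599485095157929444761061324838276866042510907786458264898292000000000000000000) * (((1 : ℝ)) * v5)^2 := by
    unfold Qf; ring
  nlinarith [sq_nonneg (((1 : ℝ)) * v0 + ((1319278882769 : ℝ) / 1000004196023396253) * v1 + ((2879420199350 : ℝ) / 1000004196023396253) * v2 + ((-11823453159794 : ℝ) / 1000004196023396253) * v3 + ((1745422042192 : ℝ) / 333334732007798751) * v4 + ((-7862470710037 : ℝ) / 1000004196023396253) * v5), sq_nonneg (((1 : ℝ)) * v1 + ((-16831714088906929877842135718273 : ℝ) / 500007256053536229682577911729537468) * v2 + ((50663594242196392017401349760621 : ℝ) / 1000014512107072459365155823459074936) * v3 + ((-6375163723687187337310995419733 : ℝ) / 125001814013384057420644477932384367) * v4 + ((10209956562852900312787856894657 : ℝ) / 1000014512107072459365155823459074936) * v5), sq_nonneg (((1 : ℝ)) * v2 + ((-58646822655688129245593621732034662384020436861899 : ℝ) / 500034496963981918755986668628403133150284638140258022) *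 v3 + ((26619037249731021756821213513743236825784711040208 : ℝ) / 250017248481990959377993334314201566575142319070129011) * v4 + ((-14393197718983475750047610183778902046887653111827 : ℝ) / 500034496963981918755986668628403133150284638140258022) * v5), sq_nonneg (((1 : ℝ)) * v3 + ((-16418599786143718851341542766927042982039882733741098732237370251238 : ℝ) / 83358492734507336033074732465954314172177445813722429219923134296460761) * v4 + ((30644852912801361822978767044822017710814477885017701666229581153105 : ℝ) / 500150956407044016198448394795725885033064674882334575319538805778764566) * v5), sq_nonneg (((1 : ℝ)) * v4 + ((-3924918802247264187482567258780096635962370665556137864064283086734510522984072284679 : ℝ) / 83372543429595231503632112447383290424596494120396755110403189738836875908982204855408191) * v5), sq_nonneg (((1 : ℝ)) * v5)]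

theorem Qf_key2 (v0 v1 v2 v3 v4 v5 : ℝ) :
    ((2505610056831778423309023839115245334207 : ℝ) / 34359272883999103066609130429406317000000) * v0^2 ≤ Qf v0 v1 v2 v3 v4 v5 := by
  have hid : Qf v0 v1 v2 v3 v4 v5 - ((2505610056831778423309023839115245334207 : ℝ) / 34359272883999103066609130429406317000000) * v0^2
      = ((288743385469 : ℝ) / 12500) * (((1 : ℝ)) * v5 + ((-99111029000451 : ℝ) / 23099470837520) * v4 + ((17568473696801 : ℝ) / 2887433854690) * v3 + ((-19810234761217 : ℝ) / 5774867709380) * v2 + ((7364439116747 : ℝ) / 5774867709380) * v1 + ((-889615918331 : ℝ) / 3299924405360) * v0)^2 + ((68590102172991886759 : ℝ) / 23099470837520000000) * (((1 : ℝ)) * v4 + ((-112190254472331094072 : ℝ) / 68590102172991886759) * v3 + ((65469866698082658132 : ℝ) / 68590102172991886759) * v2 + ((-25046589239247113212 : ℝ) / 68590102172991886759) * v1 + ((5509726550958549353 : ℝ) / 68590102172991886759) * v0)^2 + ((35460047741285937071964519 : ℝ) / 68590102172991886759000000) * (((1 : ℝ)) * v3 + ((-19193541308216610276247415 : ℝ)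 / 35460047741285937071964519) * v2 + ((872873143467344067657205 : ℝ) / 3940005304587326341329391) * v1 + ((-629096583207108188460163 : ℝ) / 11820015913761979023988173) * v0)^2 + ((3782143186008109529076674100857 : ℝ) / 35460047741285937071964519000000) * (((1 : ℝ)) * v2 + ((-423741501848797317705392480511 : ℝ) / 3782143186008109529076674100857) * v1 + ((105474720215627600412819837135 : ℝ) / 3782143186008109529076674100857) * v0)^2 + ((309233455955991927599482173864656853 : ℝ) / 3782143186008109529076674100857000000) * (((1 : ℝ)) * v1 + ((-1228629744352890432278014467435469 : ℝ) / 103077818651997309199827391288218951) * v0)^2 := by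
    unfold Qf; ring
  nlinarith [sq_nonneg (((1 : ℝ)) * v5 + ((-99111029000451 : ℝ) / 23099470837520) * v4 + ((17568473696801 : ℝ) / 2887433854690) * v3 + ((-19810234761217 : ℝ) / 5774867709380) * v2 + ((7364439116747 : ℝ) / 5774867709380) * v1 + ((-889615918331 : ℝ) / 3299924405360) * v0), sq_nonneg (((1 : ℝ)) * v4 + ((-112190254472331094072 : ℝ) / 68590102172991886759) * v3 + ((65469866698082658132 : ℝ) / 68590102172991886759) * v2 + ((-25046589239247113212 : ℝ) / 68590102172991886759) * v1 + ((5509726550958549353 : ℝ) / 68590102172991886759) * v0), sq_nonneg (((1 : ℝ)) * v3 + ((-19193541308216610276247415 : ℝ) / 35460047741285937071964519) * v2 + ((872873143467344067657205 : ℝ) / 3940005304587326341329391) * v1 + ((-629096583207108188460163 : ℝ) / 11820015913761979023988173) * v0), sq_nonneg (((1 : ℝ)) * v2 + ((-423741501848797317705392480511 : ℝ) / 3782143186008109529076674100857) * v1 + ((105474720215627600412819837135 : ℝ) / 3782143186008109529076674100857) * v0), sq_nonneg (((1 : ℝ)) * v1 + ((-1228629744352890432278014467435469 : ℝ) / 103077818651997309199827391288218951)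 * v0)]

open PowerSeries in
theorem H_coeff_bound :
    let H : PowerSeries ℝ := X ^ 2 * (1 - 2 * X) *
      (X ^ 6 - 5 * X ^ 5 + 14 * X ^ 4 - 26 * X ^ 3 + 22 * X ^ 2 - 8 * X + 1)⁻¹
    ∃ c : ℝ, 0 < c ∧ ∀ n : ℕ, PowerSeries.coeff (R := ℝ) n H ≤ c * (3.709381 : ℝ) ^ n := by
  intro H
  set r : ℝ := (3709381 : ℝ)/1000000 with hrdef
  have hr : (3.709381 : ℝ) = r := by norm_num [hrdef]
  set f : ℕ → ℝ := fun n => PowerSeries.coeff (R := ℝ) n H with hf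
  have hrec : ∀ n : ℕ,
      f (n+6) = 8*f (n+5) - 22*f (n+4) + 26*f (n+3) - 14*f (n+2) + 5*f (n+1) - f n := by
    intro n
    set D : PowerSeries ℝ := X ^ 6 - 5 * X ^ 5 + 14 * X ^ 4 - 26 * X ^ 3 + 22 * X ^ 2 - 8 * X + 1
      with hD
    have hcc : PowerSeries.constantCoeff (R := ℝ) D ≠ 0 := by rw [hD]; simp
    have hinv : (D⁻¹ : PowerSeries ℝ) * D = 1 := PowerSeries.inv_mul_cancel D hcc
    have h5 : (C (R := ℝ) 5 : ℝ⟦X⟧) = 5 := map_ofNat _ 5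
    have h14 : (C (R := ℝ) 14 : ℝ⟦X⟧) = 14 := map_ofNat _ 14
    have h26 : (C (R := ℝ) 26 : ℝ⟦X⟧) = 26 := map_ofNat _ 26
    have h22 : (C (R := ℝ) 22 : ℝ⟦X⟧) = 22 := map_ofNat _ 22
    have h8 : (C (R := ℝ) 8 : ℝ⟦X⟧) = 8 := map_ofNat _ 8
    have h2 : (C (R := ℝ) 2 : ℝ⟦X⟧) = 2 := map_ofNat _ 2
    have hHD : H * D = X ^ 2 - (C (R := ℝ) 2) * X ^ 3 := by
      show X ^ 2 * (1 - 2 * X) * D⁻¹ * D = _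
      rw [mul_assoc, hinv, h2]; ring
    have hexp : H * D = H * X ^ 6 - (C (R := ℝ) 5) * (H * X ^ 5) + (C (R := ℝ) 14) * (H * X ^ 4)
        - (C (R := ℝ) 26) * (H * X ^ 3) + (C (R := ℝ) 22) * (H * X ^ 2) - (C (R := ℝ) 8) * (H * X ^ 1) + H := by
      rw [hD, h5, h14, h26, h22, h8]; ring
    have key := congrArg (PowerSeries.coeff (R := ℝ) (n+6)) (hexp.symm.trans hHD)
    simp only [map_add, map_sub, PowerSeries.coeff_C_mul, PowerSeries.coeff_mul_X_pow',
      PowerSeries.coeff_X_pow, show ¬(n+6 = 2) by omega, show ¬(n+6 = 3) by omega,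
      if_false, if_true, show n+6-6 = n by omega, show n+6-5 = n+1 by omega,
      show n+6-4 = n+2 by omega, show n+6-3 = n+3 by omega, show n+6-2 = n+4 by omega,
      show n+6-1 = n+5 by omega, show (6 ≤ n+6) = True by simp, show (5 ≤ n+6) = True by simp,
      show (4 ≤ n+6) = True by simp, show (3 ≤ n+6) = True by simp,
      show (2 ≤ n+6) = True by simp, show (1 ≤ n+6) = True by simp,
      PowerSeries.coeff_C, show ¬(n+3 = 0) by omega] at key
    show f (n+6) = _
    simp only [hf]
    linarith
  set V : ℕ → ℝ := fun n => Qf (f n) (f (n+1)) (f (n+2)) (f (n+3)) (f (n+4)) (f (n+5)) with hV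
  have hstep : ∀ n : ℕ, V (n+1) ≤ r^2 * V n := by
    intro n
    have h := Qf_key1 (f n) (f (n+1)) (f (n+2)) (f (n+3)) (f (n+4)) (f (n+5))
    rw [← hrec n] at h
    show Qf (f (n+1)) (f (n+1+1)) (f (n+1+2)) (f (n+1+3)) (f (n+1+4)) (f (n+1+5)) ≤ _
    rw [show n+1+1 = n+2 by omega, show n+1+2 = n+3 by omega, show n+1+3 = n+4 by omega,
      show n+1+4 = n+5 by omega, show n+1+5 = n+6 by omega]
    exact h
  have hpow : ∀ n : ℕ, V n ≤ (r^2)^n * V 0 := by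
    intro n
    induction n with
    | zero => simp
    | succ m ih =>
      calc V (m+1) ≤ r^2 * V m := hstep m
        _ ≤ r^2 * ((r^2)^m * V 0) := by
            apply mul_le_mul_of_nonneg_left ih
            positivity
        _ = (r^2)^(m+1) * V 0 := by ring
  set dp : ℝ := ((2505610056831778423309023839115245334207 : ℝ) / 34359272883999103066609130429406317000000) with hdp
  have hdppos : 0 < dp := by rw [hdp]; positivity
  have hlow : ∀ n : ℕ, dp * (f n)^2 ≤ V n := fun n =>
    Qf_key2 (f n) (f (n+1)) (f (n+2)) (f (n+3)) (f (n+4)) (f (n+5))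
  have hV0 : 0 ≤ V 0 := le_trans (by positivity) (hlow 0)
  refine ⟨Real.sqrt (V 0 / dp + 1), Real.sqrt_pos.mpr (by positivity), ?_⟩
  intro n
  set c : ℝ := Real.sqrt (V 0 / dp + 1) with hcdef
  have hcpos : 0 < c := Real.sqrt_pos.mpr (by positivity)
  have hc2 : c^2 = V 0 / dp + 1 := Real.sq_sqrt (by positivity)
  have hrn : 0 < r^n := by positivity
  have h1 : dp * (f n)^2 ≤ (r^n)^2 * V 0 := by
    calc dp * (f n)^2 ≤ V n := hlow n
      _ ≤ (r^2)^n * V 0 := hpow n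
      _ = (r^n)^2 * V 0 := by rw [← pow_mul, ← pow_mul, Nat.mul_comm]
  have h2 : (f n)^2 ≤ (c * r^n)^2 := by
    have e : dp * (c * r^n)^2 = (r^n)^2 * V 0 + dp * (r^n)^2 := by
      rw [mul_pow, hc2]
      field_simp
    have h3 : dp * (f n)^2 ≤ dp * (c * r^n)^2 := by
      rw [e]
      nlinarith [h1, mul_pos hdppos (pow_pos hrn 2)]
    exact le_of_mul_le_mul_left h3 hdppos
  have hfin : f n ≤ c * r^n := by
    nlinarith [h2, mul_pos hcpos hrn]
  rw [hr]
  exact hfin
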